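/- Let U be a neighborhood of 0 and let P : U → ℝ be a map such that for every x₀ ∈ U, P(x₀) = x(2τ), where x is a solution on [0,2τ] of the controlled system with x(0) = x₀. Then P(0) = 0 and P is differentiable at 0 with P'(0) = e^{λτ}·(e^{λτ} + ελτ). -/

import Mathlib

open Set Real Filter

-- monotonicity of gronwallBound
lemma gb_mono {K d d' M M' s s' : ℝ} (hK : 0 < K) (hd0 : 0 ≤ d) (hM0 : 0 ≤ M)
    (hs0 : 0 ≤ s) (hd : d ≤ d') (hM : M ≤ M') (hs : s ≤ s') :
    gronwallBound d K M s ≤ gronwallBound d' K M' s' := by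
  simp only [gronwallBound_of_K_ne_0 hK.ne']
  have h1 : (1:ℝ) ≤ exp (K*s) := one_le_exp (by positivity)
  have h2 : exp (K*s) ≤ exp (K*s') := exp_le_exp.2 (by nlinarith)
  have h3 : M/K ≤ M'/K := (div_le_div_iff_of_pos_right hK).2 hM  -- maybe wrong name
  have h4 : 0 ≤ M/K := by positivity
  nlinarith [mul_le_mul hd h2 (by linarith) (by linarith),
    mul_le_mul h3 (by linarith : exp (K*s) - 1 ≤ exp (K*s') - 1) (by linarith) (by linarith)]

-- bootstrap Gronwall: if the bound hypothesis only holds while |x| ≤ δ, and the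
-- Gronwall bound stays below δ, then the conclusion holds on all of [a,b].
lemma gron_bootstrap {x x' : ℝ → ℝ} {a b L δ M : ℝ} (hL : 0 < L) (hM : 0 ≤ M)
    (hx : ContinuousOn x (Icc a b))
    (hd : ∀ t ∈ Ico a b, HasDerivWithinAt x (x' t) (Ici t) t)
    (hb : ∀ t ∈ Ico a b, |x t| ≤ δ → |x' t| ≤ L * |x t| + M)
    (hsmall : gronwallBound (|x a|) L M (b - a) < δ) :
    ∀ t ∈ Icc a b, |x t| ≤ gronwallBound (|x a|) L M (t - a) := by
  rcases le_or_gt a b with hab | hab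
  swap
  · intro t ht; exact absurd (ht.1.trans ht.2) (not_le.2 hab)
  have hxa : |x a| < δ := by
    calc |x a| = gronwallBound (|x a|) L M (a - a) := by rw [sub_self, gronwallBound_x0]
    _ ≤ gronwallBound (|x a|) L M (b - a) :=
        gb_mono hL (abs_nonneg _) hM (by linarith) le_rfl le_rfl (by linarith)
    _ < δ := hsmall
  have key : ∀ t ∈ Icc a b, |x t| < δ := by
    by_contra h
    push_neg at h
    obtain ⟨t₀, ht₀, hδt₀⟩ := h
    set S : Set ℝ := Icc a b ∩ (fun t => |x t|) ⁻¹' Ici δ with hS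
    have hSne : S.Nonempty := ⟨t₀, ht₀, hδt₀⟩
    have hScl : IsClosed S :=
      (continuous_abs.comp_continuousOn hx).preimage_isClosed_of_isClosed isClosed_Icc
        isClosed_Ici
    have hScomp : IsCompact S :=
      isCompact_Icc.of_isClosed_subset hScl inter_subset_left
    set c := sInf S with hc
    have hcS : c ∈ S := hScomp.sInf_mem hSne
    obtain ⟨⟨hac, hcb⟩, hδc⟩ := hcS
    have hlt : ∀ t ∈ Ico a c, |x t| < δ := by
      intro t ⟨ht1, ht2⟩
      by_contra hge
      push_neg at hge
      have : t ∈ S := ⟨⟨ht1, by linarith⟩, hge⟩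
      exact absurd (csInf_le hScomp.bddBelow this) (not_le.2 ht2)
    have hgr := norm_le_gronwallBound_of_norm_deriv_right_le
      (f := x) (f' := x') (δ := |x a|) (K := L) (ε := M) (a := a) (b := c)
      (hx.mono (Icc_subset_Icc le_rfl hcb))
      (fun t ht => hd t ⟨ht.1, lt_of_lt_of_le ht.2 hcb⟩)
      (le_of_eq (Real.norm_eq_abs _))
      (fun t ht => by
        rw [Real.norm_eq_abs, Real.norm_eq_abs]
        exact hb t ⟨ht.1, lt_of_lt_of_le ht.2 hcb⟩ (hlt t ht).le)
    have h1 : |x c| ≤ gronwallBound (|x a|) L M (c - a) := by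
      have := hgr c ⟨hac, le_rfl⟩; rwa [Real.norm_eq_abs] at this
    have h2 : gronwallBound (|x a|) L M (c - a) ≤ gronwallBound (|x a|) L M (b - a) :=
      gb_mono hL (abs_nonneg _) hM (by linarith) le_rfl le_rfl (by linarith)
    have hδc' : δ ≤ |x c| := hδc
    linarith
  intro t ht
  have := norm_le_gronwallBound_of_norm_deriv_right_le
    (f := x) (f' := x') (δ := |x a|) (K := L) (ε := M) (a := a) (b := b)
    hx hd (le_of_eq (Real.norm_eq_abs _))
    (fun s hs => by
      rw [Real.norm_eq_abs, Real.norm_eq_abs]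
      exact hb s hs (key s ⟨hs.1, hs.2.le⟩).le) t ht
  rwa [Real.norm_eq_abs] at this

/-- The linearized comparison function. -/
noncomputable def cFun (lam ε τ : ℝ) (t : ℝ) : ℝ :=
  if t ≤ τ then Real.exp (lam * t)
  else Real.exp (lam * (t - τ)) * (Real.exp (lam * τ) + ε * lam * (t - τ))

lemma cFun_cont (lam ε τ : ℝ) : Continuous (cFun lam ε τ) := by
  apply Continuous.if_le
  · exact Real.continuous_exp.comp (continuous_const.mul continuous_id)
  · fun_prop
  · exact continuous_id
  · exact continuous_const
  · intro s hs; subst hs; simp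

lemma cFun_eq_of_le {lam ε τ t : ℝ} (h : t ≤ τ) : cFun lam ε τ t = Real.exp (lam * t) :=
  if_pos h

lemma cFun_eq_of_ge {lam ε τ t : ℝ} (h : τ ≤ t) :
    cFun lam ε τ t = Real.exp (lam * (t - τ)) * (Real.exp (lam * τ) + ε * lam * (t - τ)) := by
  unfold cFun
  split_ifs with h'
  · have : t = τ := le_antisymm h' h
    subst this; simp
  · rfl

lemma cFun_deriv1 {lam ε τ : ℝ} {t : ℝ} (ht : t < τ) :
    HasDerivWithinAt (cFun lam ε τ) (lam * cFun lam ε τ t) (Ici t) t := by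
  have hexp : HasDerivAt (fun s => Real.exp (lam * s)) (lam * Real.exp (lam * t)) t := by
    have := ((hasDerivAt_id t).const_mul lam).exp
    simpa [mul_comm] using this
  rw [cFun_eq_of_le ht.le]
  apply hexp.hasDerivWithinAt.congr_of_eventuallyEq
  · filter_upwards [nhdsWithin_le_nhds (gt_mem_nhds ht)] with s hs
    exact cFun_eq_of_le hs.le
  · exact cFun_eq_of_le ht.le

lemma cFun_deriv2 {lam ε τ : ℝ} {t : ℝ} (ht : τ ≤ t) :
    HasDerivWithinAt (cFun lam ε τ)
      (lam * cFun lam ε τ t + ε * lam * Real.exp (lam * (t - τ))) (Ici t) t := by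
  set b2 : ℝ → ℝ := fun s => Real.exp (lam * (s - τ)) * (Real.exp (lam * τ) + ε * lam * (s - τ))
    with hb2
  have hexp : HasDerivAt (fun s => Real.exp (lam * (s - τ))) (lam * Real.exp (lam * (t - τ))) t := by
    have := (((hasDerivAt_id t).sub_const τ).const_mul lam).exp
    simpa [mul_comm] using this
  have hlin : HasDerivAt (fun s => Real.exp (lam * τ) + ε * lam * (s - τ)) (ε * lam) t := by
    have := (((hasDerivAt_id t).sub_const τ).const_mul (ε * lam)).const_add (Real.exp (lam * τ))
    simpa using this
  have hb2d : HasDerivAt b2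
      (lam * b2 t + ε * lam * Real.exp (lam * (t - τ))) t := by
    have : HasDerivAt b2 (lam * Real.exp (lam * (t - τ)) * (Real.exp (lam * τ) + ε * lam * (t - τ)) +
        Real.exp (lam * (t - τ)) * (ε * lam)) t := hexp.mul hlin
    convert this using 1
    show lam * (Real.exp (lam * (t - τ)) * (Real.exp (lam * τ) + ε * lam * (t - τ))) + _ = _
    ring
  have hfinal : HasDerivWithinAt (cFun lam ε τ)
      (lam * b2 t + ε * lam * Real.exp (lam * (t - τ))) (Ici t) t :=
    hb2d.hasDerivWithinAt.congr
      (fun s hs => cFun_eq_of_ge (ht.trans hs)) (cFun_eq_of_ge ht)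
  rw [cFun_eq_of_ge ht]
  exact hfinal

/-- A solution on `[0,2τ]` of the ODFC system based on a delayed velocity term
(with the control switched on, on `[τ,2τ)`), with initial value `x₀`. -/
def IsSolVelOn (f : ℝ → ℝ) (ε τ x₀ : ℝ) (x : ℝ → ℝ) : Prop :=
  ContinuousOn x (Set.Icc 0 (2 * τ)) ∧ x 0 = x₀ ∧
  (∀ t ∈ Set.Ico (0 : ℝ) τ, HasDerivWithinAt x (f (x t)) (Set.Ici t) t) ∧
  (∀ t ∈ Set.Ico τ (2 * τ),
      HasDerivWithinAt x (f (x t) + ε * derivWithin x (Set.Ici (t - τ)) (t - τ))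
        (Set.Ici t) t)

set_option maxHeartbeats 2000000 in
lemma odfc_key (f : ℝ → ℝ) (lam ε τ η δ x₀ : ℝ) (x : ℝ → ℝ)
    (hlam : 0 < lam) (hτ : 0 < τ) (hη : 0 ≤ η) (hηlam : η ≤ lam)
    (hfest : ∀ s, |s| ≤ δ → |f s - lam * s| ≤ η * |s|)
    (hx : IsSolVelOn f ε τ x₀ x)
    (hx₀ : |x₀| * (Real.exp (2*lam*τ)^2 * (1 + |ε|)) < δ) :
    |x (2*τ) - x₀ * (Real.exp (lam*τ) * (Real.exp (lam*τ) + ε*lam*τ))| ≤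
      η * |x₀| * (Real.exp (2*lam*τ)^2 * (1 + |ε|) * ((Real.exp (lam*τ) - 1)/lam) *
        (Real.exp (lam*τ) + 1 + |ε| * Real.exp (lam*τ))) := by
  obtain ⟨hcont, hx0, hd1, hd2⟩ := hx
  set L := 2*lam with hLdef
  have hL : 0 < L := by positivity
  set E := Real.exp (L*τ) with hEdef
  set A := Real.exp (lam*τ) with hAdef
  set C1 := E^2*(1+|ε|) with hC1def
  have hE1 : 1 ≤ E := Real.one_le_exp (by positivity)
  have hA1 : 1 < A := by rw [hAdef]; exact Real.one_lt_exp_iff.2 (by positivity)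
  have hEC1 : E ≤ C1 := by rw [hC1def]; nlinarith [abs_nonneg ε]
  have hx₀nn : 0 ≤ |x₀| := abs_nonneg _
  have hxEδ : |x₀| * E ≤ δ := le_of_lt (lt_of_le_of_lt (by nlinarith) hx₀)
  have hτ2 : τ ≤ 2*τ := by linarith
  -- |f s| ≤ L |s| for |s| ≤ δ
  have hflin : ∀ s, |s| ≤ δ → |f s| ≤ L * |s| := by
    intro s hs
    have h1 := hfest s hs
    have h2 : |f s| ≤ |f s - lam * s| + |lam * s| := by
      calc |f s| = |(f s - lam * s) + lam * s| := by rw [sub_add_cancel]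
        _ ≤ _ := abs_add_le _ _
    rw [abs_mul, abs_of_pos hlam] at h2
    have := abs_nonneg s
    nlinarith
  -- Stage A: a priori bound on [0, τ]
  have hA0 := gron_bootstrap (x := x) (x' := fun t => f (x t)) (a := 0) (b := τ)
    (L := L) (δ := δ) (M := 0) hL le_rfl
    (hcont.mono (Icc_subset_Icc le_rfl hτ2)) hd1
    (fun t _ hle => by simpa using hflin (x t) hle)
    (by rw [hx0, sub_zero, gronwallBound_ε0, ← hEdef]
        exact lt_of_le_of_lt (by nlinarith) hx₀)
  have hA' : ∀ t ∈ Icc 0 τ, |x t| ≤ |x₀| * E := by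
    intro t ht
    refine (hA0 t ht).trans ?_
    rw [hx0, sub_zero, gronwallBound_ε0]
    have : Real.exp (L*t) ≤ E := by rw [hEdef]; exact Real.exp_le_exp.2 (by nlinarith [ht.2])
    nlinarith
  -- rewrite the delayed-derivative equation
  have hd2' : ∀ t ∈ Ico τ (2*τ), HasDerivWithinAt x (f (x t) + ε * f (x (t - τ))) (Ici t) t := by
    intro t ht
    have hmem : t - τ ∈ Ico (0:ℝ) τ := ⟨by linarith [ht.1], by linarith [ht.2]⟩
    have h := hd2 t ht
    rwa [(hd1 _ hmem).derivWithin (uniqueDiffOn_Ici _ _ self_mem_Ici)] at h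
  -- Stage B: a priori bound on [τ, 2τ]
  set M := |ε| * (L * (|x₀| * E)) with hMdef
  have hMnn : 0 ≤ M := by positivity
  have hMoverL : M / L = |ε| * (|x₀| * E) := by rw [hMdef]; field_simp
  have hgbB : gronwallBound (|x₀| * E) L M τ ≤ |x₀| * C1 := by
    rw [gronwallBound_of_K_ne_0 hL.ne']
    simp only [← hEdef]
    rw [hMoverL, hC1def]
    nlinarith [abs_nonneg ε]
  have hB0 := gron_bootstrap (x := x) (x' := fun t => f (x t) + ε * f (x (t - τ)))
    (a := τ) (b := 2*τ) (L := L) (δ := δ) (M := M) hL hMnn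
    (hcont.mono (Icc_subset_Icc hτ.le le_rfl)) hd2'
    (fun t ht hle => by
      have hmem : t - τ ∈ Icc (0:ℝ) τ := ⟨by linarith [ht.1], by linarith [ht.2]⟩
      have h1 : |x (t-τ)| ≤ |x₀| * E := hA' _ hmem
      have h2 : |f (x (t-τ))| ≤ L * (|x₀| * E) := by
        refine (hflin _ (h1.trans hxEδ)).trans ?_
        nlinarith
      calc |f (x t) + ε * f (x (t-τ))| ≤ |f (x t)| + |ε| * |f (x (t-τ))| := by
            rw [← abs_mul]; exact abs_add_le _ _
        _ ≤ L * |x t| + M := by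
            rw [hMdef]
            exact add_le_add (hflin _ hle) (mul_le_mul_of_nonneg_left h2 (abs_nonneg ε)))
    (by
      have h3 : |x τ| ≤ |x₀| * E := hA' τ ⟨hτ.le, le_rfl⟩
      have h4 : gronwallBound (|x τ|) L M (2*τ - τ) ≤ gronwallBound (|x₀| * E) L M τ :=
        gb_mono hL (abs_nonneg _) hMnn (by linarith) h3 le_rfl (by linarith)
      linarith)
  have hB' : ∀ t ∈ Icc τ (2*τ), |x t| ≤ |x₀| * C1 := by
    intro t ht
    refine ((hB0 t ht).trans ?_)
    have h3 : |x τ| ≤ |x₀| * E := hA' τ ⟨hτ.le, le_rfl⟩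
    have h4 : gronwallBound (|x τ|) L M (t - τ) ≤ gronwallBound (|x₀| * E) L M τ :=
      gb_mono hL (abs_nonneg _) hMnn (by linarith [ht.1]) h3 le_rfl (by linarith [ht.2])
    linarith
  have hap : ∀ t ∈ Icc 0 (2*τ), |x t| ≤ |x₀| * C1 := by
    intro t ht
    rcases le_or_gt t τ with h | h
    · exact (hA' t ⟨ht.1, h⟩).trans (by nlinarith)
    · exact hB' t ⟨h.le, ht.2⟩
  have hapδ : ∀ t ∈ Icc 0 (2*τ), |x t| ≤ δ := fun t ht => (hap t ht).trans hx₀.le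
  -- error estimate
  set c : ℝ → ℝ := cFun lam ε τ with hcdef
  set w : ℝ → ℝ := fun t => x t - x₀ * c t with hwdef
  set F1 := η * (|x₀| * C1) with hF1def
  have hF1nn : 0 ≤ F1 := by positivity
  have hwc : ContinuousOn w (Icc 0 (2*τ)) :=
    hcont.sub ((continuous_const.mul (cFun_cont lam ε τ)).continuousOn)
  have hw0 : w 0 = 0 := by
    have hc0 : c 0 = 1 := by rw [hcdef, cFun_eq_of_le hτ.le]; simp
    simp [hwdef, hx0, hc0]
  have hest : ∀ t ∈ Icc 0 (2*τ), |f (x t) - lam * x t| ≤ F1 := by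
    intro t ht
    refine (hfest _ (hapδ t ht)).trans ?_
    have := hap t ht
    rw [hF1def]
    nlinarith [abs_nonneg (x t)]
  -- stage 1 of the error estimate
  have hwd1 : ∀ t ∈ Ico (0:ℝ) τ, HasDerivWithinAt w (f (x t) - x₀ * (lam * c t)) (Ici t) t :=
    fun t ht => (hd1 t ht).sub ((cFun_deriv1 ht.2).const_mul x₀)
  have hgw1 := norm_le_gronwallBound_of_norm_deriv_right_le
    (f := w) (f' := fun t => f (x t) - x₀ * (lam * c t)) (δ := 0) (K := lam) (ε := F1)
    (a := 0) (b := τ)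
    (hwc.mono (Icc_subset_Icc le_rfl hτ2)) hwd1
    (by rw [Real.norm_eq_abs, hw0, abs_zero])
    (fun t ht => by
      have h1 : |f (x t) - lam * x t| ≤ F1 := hest t ⟨ht.1, ht.2.le.trans hτ2⟩
      rw [Real.norm_eq_abs, Real.norm_eq_abs]
      have hkey : f (x t) - x₀ * (lam * c t) = lam * w t + (f (x t) - lam * x t) := by
        rw [hwdef]; ring
      simp only [hkey]
      calc |lam * w t + (f (x t) - lam * x t)| ≤ |lam * w t| + |f (x t) - lam * x t| :=
            abs_add_le _ _
        _ ≤ lam * |w t| + F1 := by rw [abs_mul, abs_of_pos hlam]; linarith)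
  have hw1 : ∀ t ∈ Icc (0:ℝ) τ, |w t| ≤ gronwallBound 0 lam F1 t := by
    intro t ht
    have := hgw1 t ht
    rwa [Real.norm_eq_abs, sub_zero] at this
  set W1 := gronwallBound 0 lam F1 τ with hW1def
  have hw1' : ∀ t ∈ Icc (0:ℝ) τ, |w t| ≤ W1 := fun t ht =>
    (hw1 t ht).trans (gb_mono hlam le_rfl hF1nn ht.1 le_rfl le_rfl ht.2)
  have hW1nn : 0 ≤ W1 := (abs_nonneg (w 0)).trans (hw1' 0 ⟨le_rfl, hτ.le⟩)
  -- stage 2 of the error estimate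
  set F2 := F1 + |ε| * (F1 + lam * W1) with hF2def
  have hwd2 : ∀ t ∈ Ico τ (2*τ), HasDerivWithinAt w
      (f (x t) + ε * f (x (t - τ)) - x₀ * (lam * c t + ε * lam * Real.exp (lam * (t - τ))))
      (Ici t) t :=
    fun t ht => (hd2' t ht).sub ((cFun_deriv2 ht.1).const_mul x₀)
  have hgw2 := norm_le_gronwallBound_of_norm_deriv_right_le
    (f := w)
    (f' := fun t => f (x t) + ε * f (x (t - τ)) -
      x₀ * (lam * c t + ε * lam * Real.exp (lam * (t - τ))))
    (δ := W1) (K := lam) (ε := F2) (a := τ) (b := 2*τ)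
    (hwc.mono (Icc_subset_Icc hτ.le le_rfl)) hwd2
    (by rw [Real.norm_eq_abs]; exact hw1' τ ⟨hτ.le, le_rfl⟩)
    (fun t ht => by
      have hmem : t - τ ∈ Icc (0:ℝ) τ := ⟨by linarith [ht.1], by linarith [ht.2]⟩
      have hmem2 : t ∈ Icc (0:ℝ) (2*τ) := ⟨by linarith [ht.1], ht.2.le⟩
      have hmem3 : t - τ ∈ Icc (0:ℝ) (2*τ) := ⟨hmem.1, by linarith [hmem.2]⟩
      have h1 : |f (x t) - lam * x t| ≤ F1 := hest t hmem2
      have h2 : |f (x (t-τ)) - lam * x (t-τ)| ≤ F1 := hest _ hmem3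
      have h3 : |w (t-τ)| ≤ W1 := hw1' _ hmem
      rw [Real.norm_eq_abs, Real.norm_eq_abs]
      have hkey : f (x t) + ε * f (x (t - τ)) -
          x₀ * (lam * c t + ε * lam * Real.exp (lam * (t - τ)))
          = lam * w t + (f (x t) - lam * x t) +
            ε * ((f (x (t-τ)) - lam * x (t-τ)) + lam * w (t-τ)) := by
        rw [hwdef]
        simp only
        rw [hcdef, cFun_eq_of_le hmem.2]
        ring
      simp only [hkey]
      have e2 : |ε * ((f (x (t-τ)) - lam * x (t-τ)) + lam * w (t-τ))| ≤ |ε| * (F1 + lam * W1) := by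
        rw [abs_mul]
        refine mul_le_mul_of_nonneg_left ?_ (abs_nonneg ε)
        calc |(f (x (t-τ)) - lam * x (t-τ)) + lam * w (t-τ)|
            ≤ |f (x (t-τ)) - lam * x (t-τ)| + |lam * w (t-τ)| := abs_add_le _ _
          _ ≤ F1 + lam * W1 := by
              rw [abs_mul, abs_of_pos hlam]
              have := mul_le_mul_of_nonneg_left h3 hlam.le
              linarith
      calc |lam * w t + (f (x t) - lam * x t) +
            ε * ((f (x (t-τ)) - lam * x (t-τ)) + lam * w (t-τ))|
          ≤ |lam * w t| + |f (x t) - lam * x t| +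
            |ε * ((f (x (t-τ)) - lam * x (t-τ)) + lam * w (t-τ))| := abs_add_three _ _ _
        _ ≤ lam * |w t| + F2 := by
            rw [abs_mul, abs_of_pos hlam, hF2def]; linarith)
  have hwfin : |w (2*τ)| ≤ gronwallBound W1 lam F2 τ := by
    have := hgw2 (2*τ) ⟨hτ2, le_rfl⟩
    rwa [Real.norm_eq_abs, show 2*τ - τ = τ by ring] at this
  -- final computation
  have hc2τ : c (2*τ) = A * (A + ε*lam*τ) := by
    rw [hcdef, cFun_eq_of_ge hτ2, show 2*τ - τ = τ by ring, ← hAdef]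
  have hLHS : x (2*τ) - x₀ * (A * (A + ε*lam*τ)) = w (2*τ) := by
    rw [hwdef]; simp only; rw [hc2τ]
  rw [hLHS]
  refine hwfin.trans (le_of_eq ?_)
  have hW1eq : W1 = F1 / lam * (A - 1) := by
    rw [hW1def]
    simp only [gronwallBound_of_K_ne_0 hlam.ne', ← hAdef]
    ring
  simp only [gronwallBound_of_K_ne_0 hlam.ne', ← hAdef]
  rw [hF2def, hW1eq, hF1def]
  field_simp
  ring

lemma odfc_exists_delta (f : ℝ → ℝ) (lam : ℝ) (hf : ContDiff ℝ 1 f) (hfeq : f 0 = 0)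
    (hfd : deriv f 0 = lam) (η : ℝ) (hη : 0 < η) :
    ∃ δ > 0, ∀ s, |s| ≤ δ → |f s - lam * s| ≤ η * |s| := by
  have hcd : ContinuousAt (deriv f) 0 := ((hf.continuous_deriv le_rfl).continuousAt)
  obtain ⟨δ', hδ', hball⟩ := Metric.continuousAt_iff.1 hcd η hη
  refine ⟨δ'/2, by positivity, fun s hs => ?_⟩
  set g := fun y => f y - lam * y with hg
  have hgd : ∀ y, HasDerivAt g (deriv f y - lam) y := fun y =>
    ((hf.differentiable one_ne_zero y).hasDerivAt).sub
      (by simpa using (hasDerivAt_id y).const_mul lam)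
  have hdiff : ∀ y ∈ Metric.closedBall (0:ℝ) (δ'/2), DifferentiableAt ℝ g y :=
    fun y _ => (hgd y).differentiableAt
  have hbound : ∀ y ∈ Metric.closedBall (0:ℝ) (δ'/2), ‖deriv g y‖ ≤ η := by
    intro y hy
    rw [(hgd y).deriv]
    have h1 : dist y 0 < δ' := lt_of_le_of_lt (Metric.mem_closedBall.1 hy) (by linarith)
    have h2 := hball h1
    rw [hfd] at h2
    rw [Real.norm_eq_abs]
    exact le_of_lt (by rwa [Real.dist_eq] at h2)
  have hmem0 : (0:ℝ) ∈ Metric.closedBall (0:ℝ) (δ'/2) :=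
    Metric.mem_closedBall_self (by positivity)
  have hmems : s ∈ Metric.closedBall (0:ℝ) (δ'/2) := by
    rw [Metric.mem_closedBall, Real.dist_eq, sub_zero]; exact hs
  have := Convex.norm_image_sub_le_of_norm_deriv_le hdiff hbound
    (convex_closedBall _ _) hmem0 hmems
  simpa [hg, hfeq, Real.norm_eq_abs] using this

/-- The period map `P` of the ODFC method based on a delayed velocity term fixes `0`
and has derivative `e^{λτ}·(e^{λτ} + ελτ)` at `0`. -/
theorem odfc_velocity_period_map_derivative
    (f : ℝ → ℝ) (lam ε τ : ℝ)
    (hf : ContDiff ℝ 1 f) (hfeq : f 0 = 0) (hfd : deriv f 0 = lam)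
    (hlam : 0 < lam) (hτ : 0 < τ)
    (U : Set ℝ) (hU : U ∈ nhds (0 : ℝ)) (P : ℝ → ℝ)
    (hP : ∀ x₀ ∈ U, ∃ x : ℝ → ℝ, IsSolVelOn f ε τ x₀ x ∧ P x₀ = x (2 * τ)) :
    P 0 = 0 ∧
    HasDerivAt P (Real.exp (lam * τ) * (Real.exp (lam * τ) + ε * lam * τ)) 0 := by
  set C1 := Real.exp (2*lam*τ)^2 * (1 + |ε|) with hC1def
  have hC1 : 0 < C1 := by positivity
  set D := C1 * ((Real.exp (lam*τ) - 1)/lam) *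
    (Real.exp (lam*τ) + 1 + |ε| * Real.exp (lam*τ)) with hDdef
  have hexp1 : 1 < Real.exp (lam*τ) := Real.one_lt_exp_iff.2 (by positivity)
  have hD : 0 < D := by
    have h3 : 0 < (Real.exp (lam*τ) - 1)/lam := div_pos (by linarith) hlam
    have h4 : 0 < Real.exp (lam*τ) + 1 + |ε| * Real.exp (lam*τ) := by positivity
    exact mul_pos (mul_pos hC1 h3) h4
  have hP0 : P 0 = 0 := by
    obtain ⟨δ, hδ, hfest⟩ := odfc_exists_delta f lam hf hfeq hfd lam hlam
    obtain ⟨x, hsol, hPx⟩ := hP 0 (mem_of_mem_nhds hU)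
    have h0 := odfc_key f lam ε τ lam δ 0 x hlam hτ hlam.le le_rfl hfest hsol
      (by simpa using hδ)
    rw [hPx]
    have h1 : |x (2*τ)| ≤ 0 := by simpa using h0
    exact abs_eq_zero.1 (le_antisymm h1 (abs_nonneg _))
  refine ⟨hP0, ?_⟩
  rw [hasDerivAt_iff_isLittleO, Asymptotics.isLittleO_iff]
  intro C hC
  set η := min lam (C / D) with hηdef
  have hηpos : 0 < η := lt_min hlam (div_pos hC hD)
  obtain ⟨δ, hδ, hfest⟩ := odfc_exists_delta f lam hf hfeq hfd η hηpos
  have hball : Metric.ball (0:ℝ) (δ / C1) ∈ nhds (0:ℝ) := Metric.ball_mem_nhds _ (by positivity)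
  filter_upwards [hball, hU] with x₀ hx₀ball hx₀U
  obtain ⟨x, hsol, hPx⟩ := hP x₀ hx₀U
  have hx₀lt : |x₀| < δ / C1 := by
    have := Metric.mem_ball.1 hx₀ball
    rwa [Real.dist_eq, sub_zero] at this
  have hx₀small : |x₀| * C1 < δ := by
    calc |x₀| * C1 < (δ/C1) * C1 := mul_lt_mul_of_pos_right hx₀lt hC1
      _ = δ := by field_simp
  have hkey := odfc_key f lam ε τ η δ x₀ x hlam hτ hηpos.le (min_le_left _ _) hfest hsol hx₀small
  rw [show Real.exp (2*lam*τ)^2 * (1 + |ε|) * ((Real.exp (lam*τ) - 1)/lam) *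
      (Real.exp (lam*τ) + 1 + |ε| * Real.exp (lam*τ)) = D by rw [hDdef, hC1def]] at hkey
  have hηD : η * |x₀| * D ≤ C * |x₀| := by
    have h1 : η ≤ C / D := min_le_right _ _
    have h2 : 0 ≤ |x₀| := abs_nonneg x₀
    have h3 : C / D * D = C := div_mul_cancel₀ C hD.ne'
    nlinarith [mul_le_mul_of_nonneg_right h1 (mul_nonneg h2 hD.le)]
  simp only [hP0, hPx, sub_zero, smul_eq_mul, Real.norm_eq_abs]
  linarith [hkey]
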